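/- arXiv:math/9907039 — 2 statements merged into one kernel-verified Lean document; each statement's English description precedes it below -/
import Mathlib

section
/- Let D : E → F be a linear map between finite-dimensional complex inner product spaces, A = [[0, D*],[D, 0]] on E ⊕ F, and let L₊ be the span of eigenvectors of A with nonnegative eigenvalue. Let P₀ : E ⊕ F → F be the projection onto the second summand. Then the kernel of P₀ restricted to L₊ equals ker D ⊕ 0, and P₀ restricted to L₊ is surjective onto F. -/
set_option maxHeartbeats 1000000

/-- The self-adjoint operator `A = [[0, D*], [D, 0]]` on `E ⊕ F`. -/
noncomputable def offDiagOp {E F : Type*}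
    [NormedAddCommGroup E] [InnerProductSpace ℂ E] [FiniteDimensional ℂ E]
    [NormedAddCommGroup F] [InnerProductSpace ℂ F] [FiniteDimensional ℂ F]
    (D : E →ₗ[ℂ] F) : (E × F) →ₗ[ℂ] (E × F) :=
  LinearMap.prod
    ((LinearMap.adjoint D) ∘ₗ LinearMap.snd ℂ E F)
    (D ∘ₗ LinearMap.fst ℂ E F)

/-- The nonnegative spectral subspace of `A = [[0, D*], [D, 0]]`:
the span of eigenvectors with nonnegative (real) eigenvalues. -/
noncomputable def nonnegSpectralSubspace {E F : Type*}
    [NormedAddCommGroup E] [InnerProductSpace ℂ E] [FiniteDimensional ℂ E]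
    [NormedAddCommGroup F] [InnerProductSpace ℂ F] [FiniteDimensional ℂ F]
    (D : E →ₗ[ℂ] F) : Submodule ℂ (E × F) :=
  ⨆ (lam : ℝ) (_ : 0 ≤ lam), Module.End.eigenspace (offDiagOp D) (lam : ℂ)

section Aux

variable {E F : Type*}
    [NormedAddCommGroup E] [InnerProductSpace ℂ E] [FiniteDimensional ℂ E]
    [NormedAddCommGroup F] [InnerProductSpace ℂ F] [FiniteDimensional ℂ F]
    (D : E →ₗ[ℂ] F)

/-- The operator `A` transported to the L2 product. -/
noncomputable def TAux : WithLp 2 (E × F) →ₗ[ℂ] WithLp 2 (E × F) :=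
  (WithLp.linearEquiv 2 ℂ (E × F)).symm.toLinearMap ∘ₗ offDiagOp D ∘ₗ
    (WithLp.linearEquiv 2 ℂ (E × F)).toLinearMap

lemma TAux_isSymmetric : (TAux D).IsSymmetric := by
  intro x y
  show (inner (𝕜 := ℂ) (TAux D x) y) = inner (𝕜 := ℂ) x (TAux D y)
  rw [WithLp.prod_inner_apply, WithLp.prod_inner_apply]
  show inner ℂ ((LinearMap.adjoint D) x.ofLp.2) y.ofLp.1 + inner ℂ (D x.ofLp.1) y.ofLp.2
      = inner ℂ x.ofLp.1 ((LinearMap.adjoint D) y.ofLp.2) + inner ℂ x.ofLp.2 (D y.ofLp.1)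
  rw [LinearMap.adjoint_inner_left, LinearMap.adjoint_inner_right]
  ring

lemma eigA_eq_map (μ : ℂ) :
    Module.End.eigenspace (offDiagOp D) μ =
      Submodule.map (WithLp.linearEquiv 2 ℂ (E × F)).toLinearMap
        (Module.End.eigenspace (TAux D) μ) := by
  ext x
  rw [Submodule.mem_map_equiv]
  simp only [Module.End.mem_eigenspace_iff]
  rw [← (WithLp.linearEquiv 2 ℂ (E × F)).symm.injective.eq_iff]
  exact Iff.rfl

lemma mem_TAux_eig_iff (μ : ℂ) (y : WithLp 2 (E × F)) :
    y ∈ Module.End.eigenspace (TAux D) μ ↔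
      (WithLp.linearEquiv 2 ℂ (E × F)) y ∈ Module.End.eigenspace (offDiagOp D) μ := by
  simp only [Module.End.mem_eigenspace_iff]
  rw [← (WithLp.linearEquiv 2 ℂ (E × F)).symm.injective.eq_iff]
  exact Iff.rfl

/-- The sign involution `(u, v) ↦ (u, -v)`. -/
noncomputable def sigmaAux : (E × F) →ₗ[ℂ] (E × F) :=
  LinearMap.prod (LinearMap.fst ℂ E F) (-(LinearMap.snd ℂ E F))

omit [FiniteDimensional ℂ E] [FiniteDimensional ℂ F] in
lemma sigmaAux_apply (x : E × F) : sigmaAux (E := E) (F := F) x = (x.1, -x.2) := rfl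

lemma sigmaAux_mem_eig {μ : ℂ} {x : E × F}
    (hx : x ∈ Module.End.eigenspace (offDiagOp D) μ) :
    sigmaAux x ∈ Module.End.eigenspace (offDiagOp D) (-μ) := by
  rw [Module.End.mem_eigenspace_iff] at hx ⊢
  have h1 : (LinearMap.adjoint D) x.2 = μ • x.1 := congrArg Prod.fst hx
  have h2 : D x.1 = μ • x.2 := congrArg Prod.snd hx
  show ((LinearMap.adjoint D) (-x.2), D x.1) = (-μ) • (x.1, -x.2)
  rw [map_neg, h1, h2]
  ext <;> simp

/-- The transported sign involution on the L2 product. -/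
noncomputable def sigmaT : WithLp 2 (E × F) →ₗ[ℂ] WithLp 2 (E × F) :=
  (WithLp.linearEquiv 2 ℂ (E × F)).symm.toLinearMap ∘ₗ sigmaAux ∘ₗ
    (WithLp.linearEquiv 2 ℂ (E × F)).toLinearMap

lemma sigmaT_mem_eig {μ : ℂ} {y : WithLp 2 (E × F)}
    (hy : y ∈ Module.End.eigenspace (TAux D) μ) :
    sigmaT (E := E) (F := F) y ∈ Module.End.eigenspace (TAux D) (-μ) := by
  rw [mem_TAux_eig_iff] at hy ⊢
  exact sigmaAux_mem_eig D hy

lemma htopT : (⨆ μ : ℂ, Module.End.eigenspace (TAux D) μ) = ⊤ :=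
  Submodule.orthogonal_eq_bot_iff.mp
    (TAux_isSymmetric D).orthogonalComplement_iSup_eigenspaces_eq_bot

lemma htopA : (⨆ μ : ℂ, Module.End.eigenspace (offDiagOp D) μ) = ⊤ := by
  simp_rw [eigA_eq_map D, ← Submodule.map_iSup, htopT D, Submodule.map_top]
  rw [LinearEquiv.range]

lemma hrealA {μ : ℂ} (h : Module.End.eigenspace (offDiagOp D) μ ≠ ⊥) :
    ∃ r : ℝ, μ = (r : ℂ) := by
  have hT : Module.End.eigenspace (TAux D) μ ≠ ⊥ := by
    intro hb
    apply h
    rw [eigA_eq_map D, hb, Submodule.map_bot]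
  have hμ : Module.End.HasEigenvalue (TAux D) μ := hT
  have := (TAux_isSymmetric D).conj_eigenvalue_eq_self hμ
  exact ⟨μ.re, (Complex.conj_eq_iff_re.mp this).symm⟩

lemma disjointT :
    Disjoint (⨆ (r : ℝ) (_ : 0 < r), Module.End.eigenspace (TAux D) (r : ℂ))
      (⨆ (r : ℝ) (_ : r ≤ 0), Module.End.eigenspace (TAux D) (r : ℂ)) := by
  refine Submodule.IsOrtho.disjoint ?_
  rw [Submodule.isOrtho_iSup_left]
  intro r
  rw [Submodule.isOrtho_iSup_left]
  intro hr
  rw [Submodule.isOrtho_iSup_right]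
  intro s
  rw [Submodule.isOrtho_iSup_right]
  intro hs
  rw [Submodule.isOrtho_iff_inner_eq]
  intro u hu v hv
  have hne : (r : ℂ) ≠ (s : ℂ) := by
    exact_mod_cast ne_of_gt (lt_of_le_of_lt hs hr)
  exact (TAux_isSymmetric D).orthogonalFamily_eigenspaces hne ⟨u, hu⟩ ⟨v, hv⟩

lemma mem_nonneg_of {r : ℝ} (hr : 0 ≤ r) {x : E × F}
    (hx : x ∈ Module.End.eigenspace (offDiagOp D) (r : ℂ)) :
    x ∈ nonnegSpectralSubspace D :=
  Submodule.mem_iSup_of_mem r (Submodule.mem_iSup_of_mem hr hx)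

end Aux

theorem stmt_8 {E F : Type*}
    [NormedAddCommGroup E] [InnerProductSpace ℂ E] [FiniteDimensional ℂ E]
    [NormedAddCommGroup F] [InnerProductSpace ℂ F] [FiniteDimensional ℂ F]
    (D : E →ₗ[ℂ] F) :
    nonnegSpectralSubspace D ⊓ LinearMap.ker (LinearMap.snd ℂ E F) =
        Submodule.map (LinearMap.inl ℂ E F) (LinearMap.ker D) ∧
      Submodule.map (LinearMap.snd ℂ E F) (nonnegSpectralSubspace D) = ⊤ := by
  constructor
  · apply le_antisymm
    · intro x hx
      have hx' : x ∈ nonnegSpectralSubspace D ⊓ LinearMap.ker (LinearMap.snd ℂ E F) := hx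
      obtain ⟨hmem, hker⟩ := hx'
      have hx2 : x.2 = 0 := hker
      -- transfer the hypothesis to the L2 product side
      have hy : (WithLp.linearEquiv 2 ℂ (E × F)).symm x ∈
          ⨆ (r : ℝ) (_ : 0 ≤ r), Module.End.eigenspace (TAux D) (r : ℂ) := by
        rw [nonnegSpectralSubspace] at hmem
        simp_rw [eigA_eq_map D, ← Submodule.map_iSup] at hmem
        exact (Submodule.mem_map_equiv _).mp hmem
      set y := (WithLp.linearEquiv 2 ℂ (E × F)).symm x with hy'
      have hsplit : (⨆ (r : ℝ) (_ : 0 ≤ r), Module.End.eigenspace (TAux D) (r : ℂ)) ≤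
          Module.End.eigenspace (TAux D) ((0 : ℝ) : ℂ) ⊔
            ⨆ (r : ℝ) (_ : 0 < r), Module.End.eigenspace (TAux D) (r : ℂ) := by
        refine iSup₂_le fun r hr => ?_
        rcases hr.eq_or_lt with rfl | h
        · exact le_sup_left
        · exact le_sup_of_le_right
            (le_iSup₂ (f := fun (s : ℝ) (_ : 0 < s) => Module.End.eigenspace (TAux D) (s : ℂ)) r h)
      have hyσ : sigmaT (E := E) (F := F) y = y := by
        show WithLp.toLp 2 ((x.1, -x.2) : E × F) = WithLp.toLp 2 x
        simp [Prod.ext_iff, hx2]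
      have hmapσ : Submodule.map (sigmaT (E := E) (F := F))
          (⨆ (r : ℝ) (_ : 0 ≤ r), Module.End.eigenspace (TAux D) (r : ℂ)) ≤
            Module.End.eigenspace (TAux D) ((0 : ℝ) : ℂ) ⊔
              ⨆ (r : ℝ) (_ : r < 0), Module.End.eigenspace (TAux D) (r : ℂ) := by
        simp_rw [Submodule.map_iSup]
        refine iSup₂_le fun r hr => ?_
        rintro _ ⟨z, hz, rfl⟩
        have hz' := sigmaT_mem_eig D hz
        rcases hr.eq_or_lt with rfl | h
        · apply Submodule.mem_sup_left
          simpa using hz'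
        · refine Submodule.mem_sup_right ?_
          have h2 : (-((r : ℝ) : ℂ)) = (((-r : ℝ)) : ℂ) := by push_cast; ring
          rw [h2] at hz'
          exact Submodule.mem_iSup_of_mem (-r) (Submodule.mem_iSup_of_mem (neg_lt_zero.2 h) hz')
      have hyneg : y ∈ Module.End.eigenspace (TAux D) ((0 : ℝ) : ℂ) ⊔
          ⨆ (r : ℝ) (_ : r < 0), Module.End.eigenspace (TAux D) (r : ℂ) :=
        hmapσ ⟨y, hy, hyσ⟩
      have hWSnp : Module.End.eigenspace (TAux D) ((0 : ℝ) : ℂ) ≤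
          ⨆ (r : ℝ) (_ : r ≤ 0), Module.End.eigenspace (TAux D) (r : ℂ) :=
        le_iSup₂ (f := fun (s : ℝ) (_ : s ≤ 0) => Module.End.eigenspace (TAux D) (s : ℂ)) (0 : ℝ) le_rfl
      have hnegle : (Module.End.eigenspace (TAux D) ((0 : ℝ) : ℂ) ⊔
          ⨆ (r : ℝ) (_ : r < 0), Module.End.eigenspace (TAux D) (r : ℂ)) ≤
            ⨆ (r : ℝ) (_ : r ≤ 0), Module.End.eigenspace (TAux D) (r : ℂ) :=
        sup_le hWSnp (iSup₂_le fun r hr =>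
          le_iSup₂ (f := fun (s : ℝ) (_ : s ≤ 0) => Module.End.eigenspace (TAux D) (s : ℂ)) r hr.le)
      have hy0 : y ∈ Module.End.eigenspace (TAux D) ((0 : ℝ) : ℂ) := by
        have h1 : y ∈ (Module.End.eigenspace (TAux D) ((0 : ℝ) : ℂ) ⊔
            ⨆ (r : ℝ) (_ : 0 < r), Module.End.eigenspace (TAux D) (r : ℂ)) ⊓
              ⨆ (r : ℝ) (_ : r ≤ 0), Module.End.eigenspace (TAux D) (r : ℂ) :=
          ⟨hsplit hy, hnegle hyneg⟩
        rwa [sup_inf_assoc_of_le _ hWSnp, (disjointT D).eq_bot, sup_bot_eq] at h1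
      have hTy : TAux D y = 0 := by
        have := Module.End.mem_eigenspace_iff.1 hy0
        simpa using this
      have hAx : offDiagOp D x = 0 := by
        have := congrArg (WithLp.linearEquiv 2 ℂ (E × F)) hTy
        simpa [TAux, hy'] using this
      have hD : D x.1 = 0 := by
        have := congrArg Prod.snd hAx
        simpa [offDiagOp] using this
      exact ⟨x.1, LinearMap.mem_ker.2 hD, by
        show ((x.1, (0 : F)) : E × F) = x
        simp [Prod.ext_iff, hx2]⟩
    · rintro _ ⟨u, hu, rfl⟩
      refine ⟨?_, ?_⟩
      · refine mem_nonneg_of D le_rfl (r := 0) ?_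
        rw [Module.End.mem_eigenspace_iff]
        show ((LinearMap.adjoint D) (0 : F), D u) = _
        rw [LinearMap.mem_ker.1 hu]
        simp
      · simp [LinearMap.mem_ker]
  · apply top_unique
    intro w _
    have hw : ((0 : E), w) ∈ ⨆ μ : ℂ, Module.End.eigenspace (offDiagOp D) μ := by
      rw [htopA D]; trivial
    refine Submodule.iSup_induction (motive := fun z : E × F =>
        z.2 ∈ Submodule.map (LinearMap.snd ℂ E F) (nonnegSpectralSubspace D)) _ hw ?_ ?_ ?_
    · intro μ x hx
      by_cases hb : Module.End.eigenspace (offDiagOp D) μ = ⊥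
      · rw [hb, Submodule.mem_bot] at hx
        rw [hx]
        exact Submodule.zero_mem _
      · obtain ⟨r, rfl⟩ := hrealA D hb
        rcases le_or_gt 0 r with h | h
        · exact ⟨x, mem_nonneg_of D h hx, rfl⟩
        · have hσ := sigmaAux_mem_eig D hx
          have h2 : (-((r : ℝ) : ℂ)) = (((-r : ℝ)) : ℂ) := by push_cast; ring
          rw [h2] at hσ
          have hmem : sigmaAux x ∈ nonnegSpectralSubspace D :=
            mem_nonneg_of D (by linarith) hσ
          have h3 : (sigmaAux x).2 ∈
              Submodule.map (LinearMap.snd ℂ E F) (nonnegSpectralSubspace D) :=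
            ⟨sigmaAux x, hmem, rfl⟩
          have h4 := Submodule.neg_mem _ h3
          simpa [sigmaAux_apply] using h4
    · exact Submodule.zero_mem _
    · intro x y hx hy
      exact Submodule.add_mem _ hx hy
end

section
/- Let H be a Hilbert space, P₁, P₂ orthogonal projections with closed ranges L₁ = Im P₁, L₂ = Im P₂, and suppose P₁ − P₂ is a compact operator. Then the operator P₂ restricted to L₁, viewed as a map L₁ → L₂, is Fredholm. -/
open scoped InnerProductSpace
open Filter Topology

private lemma aux_mem_range_iff {H : Type*} [NormedAddCommGroup H] [InnerProductSpace ℂ H]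
    (P : H →L[ℂ] H) (hP : P.comp P = P) (x : H) :
    x ∈ LinearMap.range (P : H →ₗ[ℂ] H) ↔ P x = x := by
  constructor
  · rintro ⟨y, rfl⟩
    have := DFunLike.congr_fun hP y
    simpa using this
  · intro h; exact ⟨x, h⟩

private lemma aux_isClosed_image_val {H : Type*} [TopologicalSpace H] {s : Set H}
    (hs : IsClosed s) {t : Set s} (ht : IsClosed t) : IsClosed (Subtype.val '' t) := by
  obtain ⟨C, hC, rfl⟩ := isClosed_induced_iff.mp ht
  rw [Subtype.image_preimage_coe]
  exact hs.inter hC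

/-- Riesz-type lemma: if a compact operator acts as the identity on a closed
subspace, then that subspace is finite dimensional. -/
private lemma aux_findim {H : Type*} [NormedAddCommGroup H] [NormedSpace ℂ H]
    {T : H →L[ℂ] H} (hT : IsCompactOperator ⇑T) (E : Submodule ℂ H)
    (hE : IsClosed (E : Set H)) (hid : ∀ x ∈ E, T x = x) :
    FiniteDimensional ℂ ↥E := by
  have hT' : IsCompactOperator ⇑(T : H →ₗ[ℂ] H) := hT
  obtain ⟨K, hKc, hK⟩ := hT'.image_closedBall_subset_compact 1
  have himg : (Subtype.val '' (Metric.closedBall (0 : ↥E) 1) : Set H)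
      = (E : Set H) ∩ Metric.closedBall 0 1 := by
    ext x
    simp only [Set.mem_image, Metric.mem_closedBall, Set.mem_inter_iff, SetLike.mem_coe]
    constructor
    · rintro ⟨⟨y, hy⟩, hb, rfl⟩
      exact ⟨hy, by simpa [Subtype.dist_eq] using hb⟩
    · rintro ⟨hx, hb⟩
      exact ⟨⟨x, hx⟩, by simpa [Subtype.dist_eq] using hb, rfl⟩
  have hcls : IsClosed ((E : Set H) ∩ Metric.closedBall 0 1) :=
    hE.inter Metric.isClosed_closedBall
  have hsub : (E : Set H) ∩ Metric.closedBall 0 1 ⊆ K := by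
    rintro x ⟨hx, hb⟩
    exact hK ⟨x, hb, hid x hx⟩
  have hcpt : IsCompact (Metric.closedBall (0 : ↥E) 1) := by
    rw [Subtype.isCompact_iff, himg]
    exact hKc.of_isClosed_subset hcls hsub
  exact FiniteDimensional.of_isCompact_closedBall₀ ℂ one_pos hcpt

private lemma aux_main {H : Type*}
    [NormedAddCommGroup H] [InnerProductSpace ℂ H] [CompleteSpace H]
    (P₁ P₂ : H →L[ℂ] H)
    (hP₁sa : IsSelfAdjoint P₁) (hP₂sa : IsSelfAdjoint P₂)
    (hP₁ : P₁.comp P₁ = P₁) (hP₂ : P₂.comp P₂ = P₂)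
    (hcpt : IsCompactOperator (⇑(P₁ - P₂)))
    (L₁ L₂ : Submodule ℂ H)
    (hmem₁ : ∀ x : H, x ∈ L₁ ↔ P₁ x = x)
    (hmem₂ : ∀ x : H, x ∈ L₂ ↔ P₂ x = x)
    (f : ↥L₁ →L[ℂ] ↥L₂)
    (hf : ∀ x : ↥L₁, (f x : H) = P₂ x) :
    FiniteDimensional ℂ (LinearMap.ker (f : ↥L₁ →ₗ[ℂ] ↥L₂)) ∧
      FiniteDimensional ℂ (↥L₂ ⧸ LinearMap.range (f : ↥L₁ →ₗ[ℂ] ↥L₂)) ∧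
      IsClosed (Set.range f) := by
  have hL₁closed : IsClosed (L₁ : Set H) := by
    have : (L₁ : Set H) = {x : H | P₁ x = x} := by
      ext x; exact hmem₁ x
    rw [this]
    exact isClosed_eq P₁.continuous continuous_id
  have hL₂closed : IsClosed (L₂ : Set H) := by
    have : (L₂ : Set H) = {x : H | P₂ x = x} := by
      ext x; exact hmem₂ x
    rw [this]
    exact isClosed_eq P₂.continuous continuous_id
  haveI : CompleteSpace ↥L₁ := hL₁closed.completeSpace_coe
  haveI : CompleteSpace ↥L₂ := hL₂closed.completeSpace_coe
  -- Part 1: the kernel of f is finite dimensional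
  have hE₁ : FiniteDimensional ℂ ↥((LinearMap.ker (f : ↥L₁ →ₗ[ℂ] ↥L₂)).map L₁.subtype) := by
    refine aux_findim hcpt _ ?_ ?_
    · have : (((LinearMap.ker (f : ↥L₁ →ₗ[ℂ] ↥L₂)).map L₁.subtype : Submodule ℂ H) : Set H)
          = Subtype.val '' ((LinearMap.ker (f : ↥L₁ →ₗ[ℂ] ↥L₂) : Submodule ℂ ↥L₁) : Set ↥L₁) := by
        simp [Submodule.map_coe]
      rw [this]
      exact aux_isClosed_image_val hL₁closed (ContinuousLinearMap.isClosed_ker f)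
    · rintro x ⟨⟨y, hy⟩, hyker, rfl⟩
      have h1 : P₁ y = y := (hmem₁ y).mp hy
      have h2 : P₂ y = 0 := by
        have := hf ⟨y, hy⟩
        rw [show f ⟨y, hy⟩ = 0 from hyker] at this
        simpa using this.symm
      simp [ContinuousLinearMap.sub_apply, h1, h2]
  have hker : FiniteDimensional ℂ (LinearMap.ker (f : ↥L₁ →ₗ[ℂ] ↥L₂)) := by
    have e := Submodule.equivMapOfInjective L₁.subtype (Submodule.injective_subtype L₁)
      (LinearMap.ker (f : ↥L₁ →ₗ[ℂ] ↥L₂))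
    exact Module.Finite.equiv e.symm
  -- the orthogonal complement of the kernel inside L₁
  haveI : CompleteSpace ↥(LinearMap.ker (f : ↥L₁ →ₗ[ℂ] ↥L₂)) := FiniteDimensional.complete ℂ _
  set N : Submodule ℂ ↥L₁ := (LinearMap.ker (f : ↥L₁ →ₗ[ℂ] ↥L₂))ᗮ with hNdef
  have hcompl : IsCompl (LinearMap.ker (f : ↥L₁ →ₗ[ℂ] ↥L₂)) N :=
    Submodule.isCompl_orthogonal_of_hasOrthogonalProjection
  -- Part 2: f is bounded below on N
  have key : ∃ C : ℝ, 0 < C ∧ ∀ x ∈ N, ‖x‖ ≤ C * ‖f x‖ := by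
    by_contra hcon
    push_neg at hcon
    choose u huN hu using fun n : ℕ => hcon ((n : ℝ) + 1) (by positivity)
    have hupos : ∀ n, (0 : ℝ) < ‖u n‖ := by
      intro n
      have h0 : (0 : ℝ) ≤ ((n : ℝ) + 1) * ‖f (u n)‖ := by positivity
      linarith [hu n]
    set v : ℕ → ↥L₁ := fun n => ((‖u n‖⁻¹ : ℝ) : ℂ) • u n with hvdef
    have hvN : ∀ n, v n ∈ N := fun n => N.smul_mem _ (huN n)
    have hvnorm : ∀ n, ‖v n‖ = 1 := by
      intro n
      have : ‖v n‖ = ‖u n‖⁻¹ * ‖u n‖ := by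
        rw [hvdef]
        rw [norm_smul, Complex.norm_real, Real.norm_eq_abs,
          abs_of_pos (inv_pos.mpr (hupos n))]
      rw [this, inv_mul_cancel₀ (ne_of_gt (hupos n))]
    have hfvlt : ∀ n, ‖f (v n)‖ ≤ 1 / ((n : ℝ) + 1) := by
      intro n
      have hfveq : ‖f (v n)‖ = ‖u n‖⁻¹ * ‖f (u n)‖ := by
        have h : f (v n) = ((‖u n‖⁻¹ : ℝ) : ℂ) • f (u n) := by
          rw [hvdef]; simp
        rw [h, norm_smul, Complex.norm_real, Real.norm_eq_abs,
          abs_of_pos (inv_pos.mpr (hupos n))]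
      have hlt : ‖f (u n)‖ ≤ ‖u n‖ / ((n : ℝ) + 1) := by
        rw [le_div_iff₀ (by positivity), mul_comm]
        linarith [hu n]
      rw [hfveq]
      calc ‖u n‖⁻¹ * ‖f (u n)‖ ≤ ‖u n‖⁻¹ * (‖u n‖ / ((n : ℝ) + 1)) :=
            mul_le_mul_of_nonneg_left hlt (by positivity)
        _ = 1 / ((n : ℝ) + 1) := by
            rw [div_eq_mul_inv, ← mul_assoc, inv_mul_cancel₀ (ne_of_gt (hupos n)), one_mul,
              one_div]
    have hfv0 : Tendsto (fun n => f (v n)) atTop (𝓝 0) := by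
      rw [tendsto_zero_iff_norm_tendsto_zero]
      refine squeeze_zero (fun n => norm_nonneg _) hfvlt ?_
      exact tendsto_one_div_add_atTop_nhds_zero_nat
    -- extract a convergent subsequence using compactness
    have hT' : IsCompactOperator ⇑((P₁ - P₂) : H →ₗ[ℂ] H) := hcpt
    obtain ⟨K, hKc, hK⟩ := hT'.image_closedBall_subset_compact 1
    have hmemK : ∀ n, (P₁ - P₂) ((v n : H)) ∈ K := by
      intro n
      refine hK ⟨(v n : H), ?_, rfl⟩
      rw [Metric.mem_closedBall, dist_zero_right]
      have : ‖(v n : H)‖ = ‖v n‖ := rfl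
      rw [this, hvnorm n]
    obtain ⟨y, _, φ, hφ, hconv⟩ := hKc.tendsto_subseq hmemK
    have hdecomp : ∀ n, ((v n : H)) = (P₁ - P₂) ((v n : H)) + ((f (v n) : H)) := by
      intro n
      have h1 : P₁ ((v n : H)) = (v n : H) := (hmem₁ _).mp (v n).2
      have h2 : (f (v n) : H) = P₂ ((v n : H)) := hf (v n)
      rw [ContinuousLinearMap.sub_apply, h1, h2]
      abel
    have hftend : Tendsto (fun n => ((f (v (φ n)) : H))) atTop (𝓝 0) := by
      have h1 : Tendsto (fun n => f (v (φ n))) atTop (𝓝 0) :=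
        hfv0.comp hφ.tendsto_atTop
      have := (continuous_subtype_val.tendsto (0 : ↥L₂)).comp h1
      exact this
    have hvtend : Tendsto (fun n => ((v (φ n) : H))) atTop (𝓝 y) := by
      have := hconv.add hftend
      rw [add_zero] at this
      refine this.congr fun n => ?_
      exact (hdecomp (φ n)).symm
    have hyL₁ : y ∈ L₁ :=
      hL₁closed.mem_of_tendsto hvtend (Eventually.of_forall fun n => (v (φ n)).2)
    have hvtend' : Tendsto (fun n => v (φ n)) atTop (𝓝 (⟨y, hyL₁⟩ : ↥L₁)) :=
      tendsto_subtype_rng.mpr hvtend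
    have hyN : (⟨y, hyL₁⟩ : ↥L₁) ∈ N :=
      (Submodule.isClosed_orthogonal _).mem_of_tendsto hvtend'
        (Eventually.of_forall fun n => hvN (φ n))
    have hyker : (⟨y, hyL₁⟩ : ↥L₁) ∈ LinearMap.ker (f : ↥L₁ →ₗ[ℂ] ↥L₂) := by
      rw [LinearMap.mem_ker]
      have h1 : Tendsto (fun n => f (v (φ n))) atTop (𝓝 (f ⟨y, hyL₁⟩)) :=
        (f.continuous.tendsto _).comp hvtend'
      have h2 : Tendsto (fun n => f (v (φ n))) atTop (𝓝 0) :=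
        hfv0.comp hφ.tendsto_atTop
      exact tendsto_nhds_unique h1 h2
    have hy0 : (⟨y, hyL₁⟩ : ↥L₁) = 0 := by
      have : (⟨y, hyL₁⟩ : ↥L₁) ∈ LinearMap.ker (f : ↥L₁ →ₗ[ℂ] ↥L₂) ⊓ N := ⟨hyker, hyN⟩
      rw [hNdef, Submodule.inf_orthogonal_eq_bot] at this
      simpa using this
    have hynorm : ‖(⟨y, hyL₁⟩ : ↥L₁)‖ = 1 := by
      have h1 : Tendsto (fun n => ‖v (φ n)‖) atTop (𝓝 ‖(⟨y, hyL₁⟩ : ↥L₁)‖) :=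
        (continuous_norm.tendsto _).comp hvtend'
      have h2 : Tendsto (fun n => ‖v (φ n)‖) atTop (𝓝 1) := by
        refine tendsto_const_nhds.congr fun n => ?_
        exact (hvnorm (φ n)).symm
      exact tendsto_nhds_unique h1 h2
    rw [hy0] at hynorm
    simp at hynorm
  obtain ⟨C, hCpos, hC⟩ := key
  -- the restriction of f to N
  set g : ↥N →L[ℂ] ↥L₂ := f.comp (Submodule.subtypeL N) with hgdef
  have hbound : ∀ x : ↥N, ‖x‖ ≤ C.toNNReal * ‖g x‖ := by
    intro x
    have := hC x.1 x.2
    rwa [Real.coe_toNNReal C hCpos.le]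
  have halip : AntilipschitzWith C.toNNReal ⇑g := g.antilipschitz_of_bound hbound
  haveI : CompleteSpace ↥N :=
    (Submodule.isClosed_orthogonal _).completeSpace_coe
  have hgclosed : IsClosed (Set.range ⇑g) :=
    halip.isClosed_range g.uniformContinuous
  have hrange_eq : Set.range ⇑f = Set.range ⇑g := by
    ext z
    constructor
    · rintro ⟨x, rfl⟩
      have hx : x ∈ LinearMap.ker (f : ↥L₁ →ₗ[ℂ] ↥L₂) ⊔ N := by
        rw [hcompl.sup_eq_top]; trivial
      rw [Submodule.mem_sup] at hx
      obtain ⟨k, hk, n, hn, hkn⟩ := hx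
      refine ⟨⟨n, hn⟩, ?_⟩
      have hgn : g ⟨n, hn⟩ = f n := rfl
      rw [hgn, ← hkn]
      rw [map_add, show f k = 0 from LinearMap.mem_ker.mp hk, zero_add]
    · rintro ⟨⟨x, hx⟩, rfl⟩
      exact ⟨x, rfl⟩
  have hclosed_range : IsClosed (Set.range ⇑f) := by
    rw [hrange_eq]; exact hgclosed
  -- Part 3: the cokernel is finite dimensional
  set R := LinearMap.range (f : ↥L₁ →ₗ[ℂ] ↥L₂) with hRdef
  have hRclosed : IsClosed (R : Set ↥L₂) := by
    have : (R : Set ↥L₂) = Set.range ⇑f := by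
      rw [hRdef]
      ext z
      simp [LinearMap.mem_range, Set.mem_range]
    rw [this]
    exact hclosed_range
  haveI : CompleteSpace ↥R := hRclosed.completeSpace_coe
  have hcompl₂ : IsCompl R Rᗮ := Submodule.isCompl_orthogonal_of_hasOrthogonalProjection
  -- Rᗮ is finite dimensional
  have hRperp : FiniteDimensional ℂ ↥Rᗮ := by
    have hE₂ : FiniteDimensional ℂ ↥(Rᗮ.map L₂.subtype) := by
      have hT₂ : IsCompactOperator ⇑(P₂ - P₁) := by
        have h := hcpt.neg
        have : ⇑(P₂ - P₁) = -⇑(P₁ - P₂) := by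
          funext x
          simp [ContinuousLinearMap.sub_apply]
        rw [this]
        exact h
      refine aux_findim hT₂ _ ?_ ?_
      · have : ((Rᗮ.map L₂.subtype : Submodule ℂ H) : Set H)
            = Subtype.val '' (Rᗮ : Set ↥L₂) := by
          simp [Submodule.map_coe]
        rw [this]
        exact aux_isClosed_image_val hL₂closed (R.isClosed_orthogonal)
      · rintro x ⟨⟨w, hw⟩, hwperp, rfl⟩
        have hwL₂ : P₂ w = w := (hmem₂ w).mp hw
        have hP₁w : P₁ w = 0 := by
          have horto : ∀ z : H, ⟪P₁ z, w⟫_ℂ = 0 := by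
            intro z
            have hz : P₁ z ∈ L₁ := (hmem₁ _).mpr (by simpa using DFunLike.congr_fun hP₁ z)
            have hfR : f ⟨P₁ z, hz⟩ ∈ R := ⟨⟨P₁ z, hz⟩, rfl⟩
            have h0 : ⟪f ⟨P₁ z, hz⟩, (⟨w, hw⟩ : ↥L₂)⟫_ℂ = 0 :=
              (Submodule.mem_orthogonal R _).mp hwperp _ hfR
            rw [Submodule.coe_inner] at h0
            rw [hf ⟨P₁ z, hz⟩] at h0
            have h1 := hP₂sa.isSymmetric (P₁ z) w
            simp only [ContinuousLinearMap.coe_coe] at h1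
            rw [h1, hwL₂] at h0
            exact h0
          have h0 := horto (P₁ w)
          have h2 := hP₁sa.isSymmetric (P₁ w) w
          simp only [ContinuousLinearMap.coe_coe] at h2
          rw [h2] at h0
          exact inner_self_eq_zero.mp h0
        show (P₂ - P₁) w = w
        rw [ContinuousLinearMap.sub_apply, hwL₂, hP₁w, sub_zero]
    have e := Submodule.equivMapOfInjective L₂.subtype (Submodule.injective_subtype L₂) Rᗮ
    exact Module.Finite.equiv e.symm
  have hcoker : FiniteDimensional ℂ (↥L₂ ⧸ R) := by
    have e := Submodule.quotientEquivOfIsCompl R Rᗮ hcompl₂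
    exact Module.Finite.equiv e.symm
  exact ⟨hker, hcoker, hclosed_range⟩

theorem stmt_16 {H : Type*}
    [NormedAddCommGroup H] [InnerProductSpace ℂ H] [CompleteSpace H]
    (P₁ P₂ : H →L[ℂ] H)
    (hP₁sa : IsSelfAdjoint P₁) (hP₂sa : IsSelfAdjoint P₂)
    (hP₁ : P₁.comp P₁ = P₁) (hP₂ : P₂.comp P₂ = P₂)
    (hcpt : IsCompactOperator (⇑(P₁ - P₂)))
    (f : (LinearMap.range (P₁ : H →ₗ[ℂ] H)) →L[ℂ] (LinearMap.range (P₂ : H →ₗ[ℂ] H)))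
    (hf : ∀ x : LinearMap.range (P₁ : H →ₗ[ℂ] H), (f x : H) = P₂ x) :
    FiniteDimensional ℂ (LinearMap.ker (f : (LinearMap.range (P₁ : H →ₗ[ℂ] H)) →ₗ[ℂ] (LinearMap.range (P₂ : H →ₗ[ℂ] H)))) ∧
      FiniteDimensional ℂ
        ((LinearMap.range (P₂ : H →ₗ[ℂ] H)) ⧸
          LinearMap.range (f : (LinearMap.range (P₁ : H →ₗ[ℂ] H)) →ₗ[ℂ]
            (LinearMap.range (P₂ : H →ₗ[ℂ] H)))) ∧
      IsClosed (Set.range f) :=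
  aux_main P₁ P₂ hP₁sa hP₂sa hP₁ hP₂ hcpt _ _
    (aux_mem_range_iff P₁ hP₁) (aux_mem_range_iff P₂ hP₂) f hf
end
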